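/- Let ℓ ≥ 2, and let X, T : ℝ² → Matrix (Fin ℓ) (Fin ℓ) ℝ and V : ℝ² → (Fin ℓ → ℝ) be smooth (C^∞) functions of (x,t) with V(x,t) last ≠ 0 for all (x,t) (where last denotes the last index ℓ−1 of Fin ℓ), satisfying the linear system ∂_x V = X.mulVec V and ∂_t V = T.mulVec V. Define ρ s := (V s)/(V last) for s ranging over the first ℓ−1 indices. Then the conservation-law identity ∂_t ( ∑_s X last s · ρ s + X last last ) = ∂_x ( ∑_s T last s · ρ s + T last last ) holds at every point of ℝ², where the sums run over the first ℓ−1 indices s. -/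

import Mathlib

/-- Partial derivative in the first variable `x`. -/
noncomputable def px (f : ℝ → ℝ → ℝ) : ℝ → ℝ → ℝ := fun x t => deriv (fun y => f y t) x

/-- Partial derivative in the second variable `t`. -/
noncomputable def pt (f : ℝ → ℝ → ℝ) : ℝ → ℝ → ℝ := fun x t => deriv (fun s => f x s) t

private lemma hdx (f : ℝ × ℝ → ℝ) (hf : ContDiff ℝ (⊤ : ℕ∞) f) (x t : ℝ) :
    HasDerivAt (fun y => f (y, t)) (fderiv ℝ f (x, t) (1, 0)) x :=
  (hf.differentiable (by norm_num) (x, t)).hasFDerivAt.comp_hasDerivAt x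
    ((hasDerivAt_id x).prodMk (hasDerivAt_const x t))

private lemma hdt' (f : ℝ × ℝ → ℝ) (hf : ContDiff ℝ (⊤ : ℕ∞) f) (x t : ℝ) :
    HasDerivAt (fun s => f (x, s)) (fderiv ℝ f (x, t) (0, 1)) t :=
  (hf.differentiable (by norm_num) (x, t)).hasFDerivAt.comp_hasDerivAt t
    ((hasDerivAt_const t x).prodMk (hasDerivAt_id t))

/-- the nonlocal conservation law attached to the Riccati covering of
an `ℓ×ℓ` zero-curvature representation:
`∂_t (∑_s X_{ℓs}ρ^s + X_{ℓℓ}) = ∂_x (∑_s T_{ℓs}ρ^s + T_{ℓℓ})`, where `ρ^s = v^s/v^ℓ`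
(here `ℓ = n + 2 ≥ 2` and the last index is `Fin.last (n+1)`). -/
theorem riccati_covering_conservation_law (n : ℕ)
    (X T : ℝ → ℝ → Matrix (Fin (n + 2)) (Fin (n + 2)) ℝ)
    (V : ℝ → ℝ → (Fin (n + 2) → ℝ))
    (hX : ∀ i j, ContDiff ℝ (⊤ : ℕ∞) (Function.uncurry fun x t => X x t i j))
    (hT : ∀ i j, ContDiff ℝ (⊤ : ℕ∞) (Function.uncurry fun x t => T x t i j))
    (hV : ∀ i, ContDiff ℝ (⊤ : ℕ∞) (Function.uncurry fun x t => V x t i))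
    (hnz : ∀ x t, V x t (Fin.last (n + 1)) ≠ 0)
    (hVx : ∀ x t i, px (fun x t => V x t i) x t = (X x t).mulVec (V x t) i)
    (hVt : ∀ x t i, pt (fun x t => V x t i) x t = (T x t).mulVec (V x t) i) :
    ∀ x t,
      pt (fun x t =>
            (∑ s : Fin (n + 1),
              X x t (Fin.last (n + 1)) s.castSucc
                * (V x t s.castSucc / V x t (Fin.last (n + 1))))
            + X x t (Fin.last (n + 1)) (Fin.last (n + 1))) x t
        = px (fun x t =>
            (∑ s : Fin (n + 1),
              T x t (Fin.last (n + 1)) s.castSucc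
                * (V x t s.castSucc / V x t (Fin.last (n + 1))))
            + T x t (Fin.last (n + 1)) (Fin.last (n + 1))) x t := by
  intro x t
  have hf : ContDiff ℝ (⊤ : ℕ∞) (fun p : ℝ × ℝ => V p.1 p.2 (Fin.last (n + 1))) :=
    hV (Fin.last (n + 1))
  set f : ℝ × ℝ → ℝ := fun p => V p.1 p.2 (Fin.last (n + 1)) with hfdef
  have hg1 : ContDiff ℝ (⊤ : ℕ∞) (fun p : ℝ × ℝ => fderiv ℝ f p ((1 : ℝ), (0 : ℝ))) :=
    (hf.fderiv_right (by norm_num)).clm_apply contDiff_const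
  have hg2 : ContDiff ℝ (⊤ : ℕ∞) (fun p : ℝ × ℝ => fderiv ℝ f p ((0 : ℝ), (1 : ℝ))) :=
    (hf.fderiv_right (by norm_num)).clm_apply contDiff_const
  -- the X-expression is ∂_x v / v
  have hFeq : (fun x t =>
        (∑ s : Fin (n + 1),
          X x t (Fin.last (n + 1)) s.castSucc
            * (V x t s.castSucc / V x t (Fin.last (n + 1))))
        + X x t (Fin.last (n + 1)) (Fin.last (n + 1)))
      = fun x t => fderiv ℝ f (x, t) (1, 0) / f (x, t) := by
    funext a b
    have hv : f (a, b) ≠ 0 := hnz a b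
    have h1 : fderiv ℝ f (a, b) (1, 0) = (X a b).mulVec (V a b) (Fin.last (n + 1)) := by
      rw [← (hdx f hf a b).deriv]
      exact hVx a b (Fin.last (n + 1))
    rw [h1]
    simp only [Matrix.mulVec, dotProduct]
    rw [eq_div_iff hv, add_mul, Finset.sum_mul]
    conv_rhs => rw [Fin.sum_univ_castSucc]
    congr 1
    refine Finset.sum_congr rfl fun s _ => ?_
    field_simp
    exact mul_div_cancel_right₀ _ hv
  have hGeq : (fun x t =>
        (∑ s : Fin (n + 1),
          T x t (Fin.last (n + 1)) s.castSucc
            * (V x t s.castSucc / V x t (Fin.last (n + 1))))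
        + T x t (Fin.last (n + 1)) (Fin.last (n + 1)))
      = fun x t => fderiv ℝ f (x, t) (0, 1) / f (x, t) := by
    funext a b
    have hv : f (a, b) ≠ 0 := hnz a b
    have h1 : fderiv ℝ f (a, b) (0, 1) = (T a b).mulVec (V a b) (Fin.last (n + 1)) := by
      rw [← (hdt' f hf a b).deriv]
      exact hVt a b (Fin.last (n + 1))
    rw [h1]
    simp only [Matrix.mulVec, dotProduct]
    rw [eq_div_iff hv, add_mul, Finset.sum_mul]
    conv_rhs => rw [Fin.sum_univ_castSucc]
    congr 1
    refine Finset.sum_congr rfl fun s _ => ?_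
    field_simp
    exact mul_div_cancel_right₀ _ hv
  rw [hFeq, hGeq]
  have hv : f (x, t) ≠ 0 := hnz x t
  have hL := ((hdt' (fun p => fderiv ℝ f p ((1 : ℝ), (0 : ℝ))) hg1 x t).div
    (hdt' f hf x t) hv).deriv
  have hR := ((hdx (fun p => fderiv ℝ f p ((0 : ℝ), (1 : ℝ))) hg2 x t).div
    (hdx f hf x t) hv).deriv
  have hLHS : pt (fun x t => fderiv ℝ f (x, t) (1, 0) / f (x, t)) x t
      = (fderiv ℝ (fun p => fderiv ℝ f p ((1 : ℝ), (0 : ℝ))) (x, t) (0, 1) * f (x, t)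
         - fderiv ℝ f (x, t) (1, 0) * fderiv ℝ f (x, t) (0, 1)) / f (x, t) ^ 2 := hL
  have hRHS : px (fun x t => fderiv ℝ f (x, t) (0, 1) / f (x, t)) x t
      = (fderiv ℝ (fun p => fderiv ℝ f p ((0 : ℝ), (1 : ℝ))) (x, t) (1, 0) * f (x, t)
         - fderiv ℝ f (x, t) (0, 1) * fderiv ℝ f (x, t) (1, 0)) / f (x, t) ^ 2 := hR
  rw [hLHS, hRHS]
  have hf' : ContDiff ℝ (⊤ : ℕ∞) (fderiv ℝ f) := hf.fderiv_right (by norm_num)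
  have hF2 : HasFDerivAt (fderiv ℝ f) (fderiv ℝ (fderiv ℝ f) (x, t)) (x, t) :=
    (hf'.differentiable (by norm_num) (x, t)).hasFDerivAt
  have e1 : fderiv ℝ (fun p => fderiv ℝ f p ((1 : ℝ), (0 : ℝ))) (x, t)
      = (ContinuousLinearMap.apply ℝ ℝ ((1 : ℝ), (0 : ℝ))).comp
          (fderiv ℝ (fderiv ℝ f) (x, t)) :=
    ((ContinuousLinearMap.apply ℝ ℝ ((1 : ℝ), (0 : ℝ))).hasFDerivAt.comp (x, t) hF2).fderiv
  have e2 : fderiv ℝ (fun p => fderiv ℝ f p ((0 : ℝ), (1 : ℝ))) (x, t)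
      = (ContinuousLinearMap.apply ℝ ℝ ((0 : ℝ), (1 : ℝ))).comp
          (fderiv ℝ (fderiv ℝ f) (x, t)) :=
    ((ContinuousLinearMap.apply ℝ ℝ ((0 : ℝ), (1 : ℝ))).hasFDerivAt.comp (x, t) hF2).fderiv
  have hsymm : fderiv ℝ (fderiv ℝ f) (x, t) ((0 : ℝ), (1 : ℝ)) ((1 : ℝ), (0 : ℝ))
      = fderiv ℝ (fderiv ℝ f) (x, t) ((1 : ℝ), (0 : ℝ)) ((0 : ℝ), (1 : ℝ)) :=
    second_derivative_symmetric (fun y => (hf.differentiable (by norm_num) y).hasFDerivAt) hF2 _ _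
  rw [e1, e2]
  simp only [ContinuousLinearMap.comp_apply, ContinuousLinearMap.apply_apply]
  rw [hsymm]
  ring
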